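/- Let k₂ ∈ ℝ with k₂ ≠ 0, and define vector fields f, g : ℝ³ → ℝ³ by f(x) = k₂ x₂² • (0, −2, 1) and g(x) = x₁ • (−1, 1, 0). Then for every x ∈ ℝ³ with x₁ ≠ 0, the span of the three vectors g(x), [f, g](x), [g, [f, g]](x) equals span_ℝ{(−1, 1, 0), (0, −2, 1)}, a 2-dimensional subspace of ℝ³. (The consecutive reaction X₁ → X₂, 2X₂ → X₃ with the rate coefficient of its initializer as single control input is controllable at every point with x₁ ≠ 0.) -/

import Mathlib

/-- The Lie bracket of two vector fields on `ℝ³`: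
`[φ,ψ](x) = Dψ(x)(φ(x)) − Dφ(x)(ψ(x))`. -/
noncomputable def lieBracket (φ ψ : (Fin 3 → ℝ) → (Fin 3 → ℝ))
    (x : Fin 3 → ℝ) : Fin 3 → ℝ :=
  fderiv ℝ ψ x (φ x) - fderiv ℝ φ x (ψ x)

/-- Drift vector field `f(x) = k₂ x₂² • (0, −2, 1)` of the consecutive reaction
`X₁ → X₂`, `2X₂ → X₃`. -/
noncomputable def drift (k₂ : ℝ) (x : Fin 3 → ℝ) : Fin 3 → ℝ :=
  (k₂ * x 1 ^ 2) • ![0, -2, 1]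

/-- Control vector field `g(x) = x₁ • (−1, 1, 0)`. -/
noncomputable def ctrl (x : Fin 3 → ℝ) : Fin 3 → ℝ :=
  x 0 • ![-1, 1, 0]


open ContinuousLinearMap in
lemma hasFDerivAt_ctrl (x : Fin 3 → ℝ) :
    HasFDerivAt ctrl
      ((ContinuousLinearMap.proj (R := ℝ) (φ := fun _ : Fin 3 => ℝ) 0).smulRight
        (![-1, 1, 0] : Fin 3 → ℝ)) x := by
  have h := ((ContinuousLinearMap.proj (R := ℝ) (φ := fun _ : Fin 3 => ℝ) 0).hasFDerivAt
      (x := x)).smul_const (![-1, 1, 0] : Fin 3 → ℝ)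
  exact h

open ContinuousLinearMap in
lemma hasFDerivAt_drift (k₂ : ℝ) (x : Fin 3 → ℝ) :
    HasFDerivAt (drift k₂)
      ((ContinuousLinearMap.proj (R := ℝ) (φ := fun _ : Fin 3 => ℝ) 1).smulRight
        ((2 * k₂ * x 1) • ![0, -2, 1])) x := by
  have h1 := (ContinuousLinearMap.proj (R := ℝ) (φ := fun _ : Fin 3 => ℝ) 1).hasFDerivAt (x := x)
  have h2 := (((h1.mul h1)).const_mul k₂).smul_const (![0, -2, 1] : Fin 3 → ℝ)
  unfold drift
  convert h2 using 1
  iterate 6 rfl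
  · funext y; simp; ring_nf; simp
  
  ext v i
  fin_cases i <;> simp [smul_smul] <;> ring

lemma bracket1_eq (k₂ : ℝ) :
    lieBracket (drift k₂) ctrl =
      fun x => (-(2 * k₂) * (x 0 * x 1)) • (![0, -2, 1] : Fin 3 → ℝ) := by
  funext x
  unfold lieBracket
  rw [(hasFDerivAt_ctrl x).fderiv, (hasFDerivAt_drift k₂ x).fderiv]
  funext i
  unfold drift ctrl
  fin_cases i <;> simp <;> ring

open ContinuousLinearMap in
lemma hasFDerivAt_bracket1 (k₂ : ℝ) (x : Fin 3 → ℝ) :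
    HasFDerivAt (lieBracket (drift k₂) ctrl)
      (((-(2 * k₂)) • ((x 0) • (ContinuousLinearMap.proj (R := ℝ) (φ := fun _ : Fin 3 => ℝ) 1)
          + (x 1) • (ContinuousLinearMap.proj (R := ℝ) (φ := fun _ : Fin 3 => ℝ) 0))).smulRight
        (![0, -2, 1] : Fin 3 → ℝ)) x := by
  rw [bracket1_eq]
  have h0 := (ContinuousLinearMap.proj (R := ℝ) (φ := fun _ : Fin 3 => ℝ) 0).hasFDerivAt (x := x)
  have h1 := (ContinuousLinearMap.proj (R := ℝ) (φ := fun _ : Fin 3 => ℝ) 1).hasFDerivAt (x := x)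
  exact ((h0.mul h1).const_mul (-(2 * k₂))).smul_const (![0, -2, 1] : Fin 3 → ℝ)

lemma bracket2_eq (k₂ : ℝ) (x : Fin 3 → ℝ) :
    lieBracket ctrl (lieBracket (drift k₂) ctrl) x =
      (-(2 * k₂) * (x 0 * x 0 - x 0 * x 1)) • (![0, -2, 1] : Fin 3 → ℝ) := by
  rw [lieBracket]
  rw [(hasFDerivAt_ctrl x).fderiv, (hasFDerivAt_bracket1 k₂ x).fderiv]
  funext i
  rw [bracket1_eq]
  unfold ctrl
  fin_cases i <;> simp <;> ring

/-- for `k₂ ≠ 0` and every `x` with `x₁ ≠ 0`, the span of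
`g(x), [f,g](x), [g,[f,g]](x)` equals `span{(−1,1,0), (0,−2,1)}`, which is a
2-dimensional subspace of `ℝ³`. -/
theorem span_brackets_eq (k₂ : ℝ) (hk₂ : k₂ ≠ 0) (x : Fin 3 → ℝ) (hx : x 0 ≠ 0) :
    Submodule.span ℝ
        {ctrl x, lieBracket (drift k₂) ctrl x,
          lieBracket ctrl (lieBracket (drift k₂) ctrl) x} =
      Submodule.span ℝ {![(-1 : ℝ), 1, 0], ![(0 : ℝ), -2, 1]} ∧
    Module.finrank ℝ
        (Submodule.span ℝ {![(-1 : ℝ), 1, 0], ![(0 : ℝ), -2, 1]}) = 2 := by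
  set d : Fin 3 → ℝ := ![-1, 1, 0] with hd
  set c : Fin 3 → ℝ := ![0, -2, 1] with hc
  have h1 : lieBracket (drift k₂) ctrl x = (-(2 * k₂) * (x 0 * x 1)) • c := by
    rw [bracket1_eq]
  have h2 : lieBracket ctrl (lieBracket (drift k₂) ctrl) x =
      (-(2 * k₂) * (x 0 * x 0 - x 0 * x 1)) • c := bracket2_eq k₂ x
  have hctrl : ctrl x = x 0 • d := rfl
  set a : ℝ := -(2 * k₂) * (x 0 * x 1) with ha
  set b : ℝ := -(2 * k₂) * (x 0 * x 0 - x 0 * x 1) with hb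
  have hs : a + b = -(2 * k₂) * (x 0 * x 0) := by ring
  have hsne : a + b ≠ 0 := by
    rw [hs]
    exact mul_ne_zero (neg_ne_zero.mpr (by positivity)) (mul_ne_zero hx hx)
  have hdmem : d ∈ Submodule.span ℝ ({d, c} : Set (Fin 3 → ℝ)) :=
    Submodule.subset_span (Set.mem_insert _ _)
  have hcmem : c ∈ Submodule.span ℝ ({d, c} : Set (Fin 3 → ℝ)) :=
    Submodule.subset_span (Set.mem_insert_of_mem _ rfl)
  constructor
  · apply le_antisymm
    · rw [Submodule.span_le]
      intro v hv
      simp only [Set.mem_insert_iff, Set.mem_singleton_iff] at hv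
      rcases hv with rfl | rfl | rfl
      · rw [hctrl]; exact Submodule.smul_mem _ _ hdmem
      · rw [h1]; exact Submodule.smul_mem _ _ hcmem
      · rw [h2]; exact Submodule.smul_mem _ _ hcmem
    · rw [Submodule.span_le]
      have hm1 : ctrl x ∈ Submodule.span ℝ
          ({ctrl x, lieBracket (drift k₂) ctrl x,
            lieBracket ctrl (lieBracket (drift k₂) ctrl) x} : Set (Fin 3 → ℝ)) :=
        Submodule.subset_span (Set.mem_insert _ _)
      have hm2 : lieBracket (drift k₂) ctrl x ∈ Submodule.span ℝ
          ({ctrl x, lieBracket (drift k₂) ctrl x,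
            lieBracket ctrl (lieBracket (drift k₂) ctrl) x} : Set (Fin 3 → ℝ)) :=
        Submodule.subset_span (Set.mem_insert_of_mem _ (Set.mem_insert _ _))
      have hm3 : lieBracket ctrl (lieBracket (drift k₂) ctrl) x ∈ Submodule.span ℝ
          ({ctrl x, lieBracket (drift k₂) ctrl x,
            lieBracket ctrl (lieBracket (drift k₂) ctrl) x} : Set (Fin 3 → ℝ)) :=
        Submodule.subset_span (Set.mem_insert_of_mem _ (Set.mem_insert_of_mem _ rfl))
      intro v hv
      rcases hv with rfl | hv
      · have : d = (x 0)⁻¹ • ctrl x := by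
          rw [hctrl, inv_smul_smul₀ hx]
        rw [this]
        exact Submodule.smul_mem _ _ hm1
      · rw [Set.mem_singleton_iff] at hv
        subst hv
        have hsum : (a + b) • c ∈ Submodule.span ℝ
            ({ctrl x, lieBracket (drift k₂) ctrl x,
              lieBracket ctrl (lieBracket (drift k₂) ctrl) x} : Set (Fin 3 → ℝ)) := by
          rw [add_smul, ← h1, ← h2]
          exact Submodule.add_mem _ hm2 hm3
        have : c = (a + b)⁻¹ • ((a + b) • c) := by rw [inv_smul_smul₀ hsne]
        rw [this]
        exact Submodule.smul_mem _ _ hsum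
  · have hli : LinearIndependent ℝ ![d, c] := by
      refine linearIndependent_fin2.mpr ⟨?_, ?_⟩
      · intro h
        have := congrFun h 2
        simp [hc] at this
      · intro t h
        have := congrFun h 0
        simp [hc, hd] at this
    have hrange : ({d, c} : Set (Fin 3 → ℝ)) = Set.range ![d, c] := by
      ext y
      simp [Matrix.range_cons, Matrix.range_empty]
      tauto
    rw [hrange, finrank_span_eq_card hli]
    simp
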